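/- For 0 < r < 1 and θ ∈ [−π,π] let T(r,θ) = ((r²−1)/log r) · 1/(1 − 2r·cos θ + r²). Then for each fixed θ ∈ [−π,π], the function r ↦ T(r,θ) is strictly increasing on (0,1); moreover, if θ ≠ 0 then T(r,θ) → 1/(1−cos θ) as r → 1 from the left, while T(r,0) → +∞ as r → 1 from the left. -/

import Mathlib

open Filter

/-- T(r,θ) = ((r²−1)/log r) · 1/(1 − 2r·cos θ + r²). -/
noncomputable def Tker (r θ : ℝ) : ℝ :=
  ((r ^ 2 - 1) / Real.log r) * (1 / (1 - 2 * r * Real.cos θ + r ^ 2))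

lemma phi_pos {r : ℝ} (h0 : 0 < r) (h1 : r < 1) :
    0 < 1 - r ^ 2 + 2 * r * Real.log r := by
  have hx : 0 < r⁻¹ := by positivity
  have hlr : Real.log r < 0 := Real.log_neg h0 h1
  have h2 : -Real.log r < Real.sinh (-Real.log r) :=
    Real.self_lt_sinh_iff.mpr (by linarith)
  have h3 : Real.sinh (Real.log r⁻¹) = (r⁻¹ - r) / 2 := by
    rw [Real.sinh_log hx, inv_inv]
  rw [Real.log_inv] at h3
  rw [h3] at h2
  have h5 : r * r⁻¹ = 1 := mul_inv_cancel₀ h0.ne'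
  nlinarith [h2, h5, h0]

lemma hasDerivAt_Tker (θ : ℝ) {r : ℝ} (hr : r ∈ Set.Ioo (0 : ℝ) 1) :
    HasDerivAt (fun r => Tker r θ)
      (((2 * r * Real.log r - (r ^ 2 - 1) * r⁻¹) / (Real.log r) ^ 2) *
          (1 / (1 - 2 * r * Real.cos θ + r ^ 2)) +
        ((r ^ 2 - 1) / Real.log r) *
          (-(2 * r - 2 * Real.cos θ) / (1 - 2 * r * Real.cos θ + r ^ 2) ^ 2)) r := by
  obtain ⟨h0, h1⟩ := hr
  set c := Real.cos θ with hc
  have hL : Real.log r < 0 := Real.log_neg h0 h1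
  have hD : 0 < 1 - 2 * r * c + r ^ 2 := by
    nlinarith [Real.cos_le_one θ, sq_nonneg (1 - r)]
  have hnum : HasDerivAt (fun x : ℝ => x ^ 2 - 1) (2 * r) r := by
    simpa using (hasDerivAt_pow 2 r).sub_const 1
  have hlog : HasDerivAt Real.log r⁻¹ r := Real.hasDerivAt_log h0.ne'
  have hf : HasDerivAt (fun x : ℝ => (x ^ 2 - 1) / Real.log x)
      ((2 * r * Real.log r - (r ^ 2 - 1) * r⁻¹) / (Real.log r) ^ 2) r :=
    hnum.div hlog hL.ne
  have hDd : HasDerivAt (fun x : ℝ => 1 - 2 * x * c + x ^ 2) (2 * r - 2 * c) r := by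
    have h := (((hasDerivAt_id r).const_mul (2 : ℝ)).mul_const c).const_sub 1
    have h2 := h.fun_add (hasDerivAt_pow 2 r)
    exact h2.congr_deriv (by norm_num; ring)
  have hg : HasDerivAt (fun x : ℝ => 1 / (1 - 2 * x * c + x ^ 2))
      (-(2 * r - 2 * c) / (1 - 2 * r * c + r ^ 2) ^ 2) r := by
    simpa [one_div] using hDd.fun_inv hD.ne'
  simpa [Tker] using hf.fun_mul hg

lemma deriv_Tker_pos (θ : ℝ) {r : ℝ} (hr : r ∈ Set.Ioo (0 : ℝ) 1) :
    0 < ((2 * r * Real.log r - (r ^ 2 - 1) * r⁻¹) / (Real.log r) ^ 2) *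
          (1 / (1 - 2 * r * Real.cos θ + r ^ 2)) +
        ((r ^ 2 - 1) / Real.log r) *
          (-(2 * r - 2 * Real.cos θ) / (1 - 2 * r * Real.cos θ + r ^ 2) ^ 2) := by
  obtain ⟨h0, h1⟩ := hr
  set c := Real.cos θ with hc
  set L := Real.log r with hLdef
  have hL : L < 0 := Real.log_neg h0 h1
  have hc1 : c ≤ 1 := Real.cos_le_one θ
  have hc2 : -1 ≤ c := Real.neg_one_le_cos θ
  have hD : 0 < 1 - 2 * r * c + r ^ 2 := by nlinarith [sq_nonneg (1 - r)]
  have hφ : 0 < 1 - r ^ 2 + 2 * r * L := phi_pos h0 h1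
  have hψ : 0 < 1 - r ^ 2 - 2 * r * L := by nlinarith
  have ha : 0 < (1 - r) ^ 2 * (1 - r ^ 2 - 2 * r * L) :=
    mul_pos (pow_pos (by linarith) 2) hψ
  have hb : 0 < (1 + r) ^ 2 * (1 - r ^ 2 + 2 * r * L) :=
    mul_pos (pow_pos (by linarith) 2) hφ
  have hE : 0 < (2 * r ^ 2 * L + 1 - r ^ 2) * (1 - 2 * r * c + r ^ 2) +
      r * L * (r ^ 2 - 1) * (2 * c - 2 * r) := by
    rcases le_total c 0 with h | h
    · nlinarith [mul_nonneg (by linarith : (0:ℝ) ≤ 1 + c) ha.le,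
        mul_nonneg (by linarith : (0:ℝ) ≤ -c) hb.le, hb]
    · nlinarith [mul_nonneg (by linarith : (0:ℝ) ≤ 1 - c) hb.le,
        mul_nonneg h ha.le, ha]
  have key : ((2 * r * L - (r ^ 2 - 1) * r⁻¹) / L ^ 2) *
          (1 / (1 - 2 * r * c + r ^ 2)) +
        ((r ^ 2 - 1) / L) *
          (-(2 * r - 2 * c) / (1 - 2 * r * c + r ^ 2) ^ 2) =
      ((2 * r ^ 2 * L + 1 - r ^ 2) * (1 - 2 * r * c + r ^ 2) +
        r * L * (r ^ 2 - 1) * (2 * c - 2 * r)) /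
        (r * L ^ 2 * (1 - 2 * r * c + r ^ 2) ^ 2) := by
    have hLne : L ≠ 0 := hL.ne
    have hDne : (1 - 2 * r * c + r ^ 2) ≠ 0 := hD.ne'
    have hrne : r ≠ 0 := h0.ne'
    field_simp
    ring
  rw [key]
  have hL2 : 0 < L ^ 2 := by nlinarith [mul_pos (neg_pos.mpr hL) (neg_pos.mpr hL)]
  exact div_pos hE (mul_pos (mul_pos h0 hL2) (pow_pos hD 2))

lemma first_factor_tendsto :
    Tendsto (fun r : ℝ => (r ^ 2 - 1) / Real.log r) (nhdsWithin 1 (Set.Iio 1)) (nhds 2) := by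
  have hlog : HasDerivAt Real.log 1 1 := by
    simpa using Real.hasDerivAt_log one_ne_zero
  have hslope : Tendsto (fun y : ℝ => Real.log y / (y - 1)) (nhdsWithin 1 {(1:ℝ)}ᶜ) (nhds 1) := by
    have := (hasDerivAt_iff_tendsto_slope).mp hlog
    simpa [slope_fun_def_field, Real.log_one] using this
  have hinv : Tendsto (fun y : ℝ => (y - 1) / Real.log y) (nhdsWithin 1 {(1:ℝ)}ᶜ) (nhds 1) := by
    have := hslope.inv₀ one_ne_zero
    simpa [inv_div] using this
  have hmono : nhdsWithin (1:ℝ) (Set.Iio 1) ≤ nhdsWithin 1 {(1:ℝ)}ᶜ :=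
    nhdsWithin_mono 1 (fun x hx => ne_of_lt hx)
  have hinv' := hinv.mono_left hmono
  have hadd : Tendsto (fun y : ℝ => y + 1) (nhdsWithin 1 (Set.Iio 1)) (nhds 2) := by
    have hc : Continuous fun y : ℝ => y + 1 := by continuity
    have h := hc.tendsto 1
    norm_num at h
    exact h.mono_left nhdsWithin_le_nhds
  have := hadd.mul hinv'
  have heq : (fun y : ℝ => (y + 1) * ((y - 1) / Real.log y)) =
      fun y : ℝ => (y ^ 2 - 1) / Real.log y := by
    funext y; ring
  rw [heq] at this
  simpa using this

theorem stmt14 :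
    (∀ θ ∈ Set.Icc (-Real.pi) Real.pi,
      StrictMonoOn (fun r => Tker r θ) (Set.Ioo (0 : ℝ) 1)) ∧
    (∀ θ ∈ Set.Icc (-Real.pi) Real.pi, θ ≠ 0 →
      Tendsto (fun r => Tker r θ) (nhdsWithin 1 (Set.Iio 1))
        (nhds (1 / (1 - Real.cos θ)))) ∧
    Tendsto (fun r => Tker r 0) (nhdsWithin 1 (Set.Iio 1)) atTop := by
  refine ⟨?_, ?_, ?_⟩
  · intro θ _
    apply strictMonoOn_of_deriv_pos (convex_Ioo 0 1)
    · intro r hr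
      exact (hasDerivAt_Tker θ hr).continuousAt.continuousWithinAt
    · intro r hr
      rw [interior_Ioo] at hr
      rw [(hasDerivAt_Tker θ hr).deriv]
      exact deriv_Tker_pos θ hr
  · intro θ hθ hθ0
    have hπ := Real.pi_pos
    have hcos : Real.cos θ < 1 := by
      refine lt_of_le_of_ne (Real.cos_le_one θ) (fun h => hθ0 ?_)
      exact (Real.cos_eq_one_iff_of_lt_of_lt (by linarith [hθ.1]) (by linarith [hθ.2])).mp h
    have hne : (2 : ℝ) - 2 * Real.cos θ ≠ 0 := by linarith
    have hden : Tendsto (fun r : ℝ => 1 - 2 * r * Real.cos θ + r ^ 2)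
        (nhdsWithin 1 (Set.Iio 1)) (nhds (2 - 2 * Real.cos θ)) := by
      have : Continuous fun r : ℝ => 1 - 2 * r * Real.cos θ + r ^ 2 := by continuity
      have h := this.tendsto (1:ℝ)
      have : (1 : ℝ) - 2 * 1 * Real.cos θ + 1 ^ 2 = 2 - 2 * Real.cos θ := by ring
      rw [this] at h
      exact h.mono_left nhdsWithin_le_nhds
    have hsec : Tendsto (fun r : ℝ => 1 / (1 - 2 * r * Real.cos θ + r ^ 2))
        (nhdsWithin 1 (Set.Iio 1)) (nhds (1 / (2 - 2 * Real.cos θ))) :=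
      tendsto_const_nhds.div hden hne
    have := first_factor_tendsto.mul hsec
    have heq : (2 : ℝ) * (1 / (2 - 2 * Real.cos θ)) = 1 / (1 - Real.cos θ) := by
      have : (1 : ℝ) - Real.cos θ ≠ 0 := by linarith
      field_simp
    rw [heq] at this
    exact this
  · have hsec : Tendsto (fun r : ℝ => 1 / (1 - 2 * r + r ^ 2))
        (nhdsWithin 1 (Set.Iio 1)) atTop := by
      have hd : Tendsto (fun r : ℝ => 1 - 2 * r + r ^ 2)
          (nhdsWithin 1 (Set.Iio 1)) (nhdsWithin 0 (Set.Ioi 0)) := by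
        rw [tendsto_nhdsWithin_iff]
        constructor
        · have : Continuous fun r : ℝ => 1 - 2 * r + r ^ 2 := by continuity
          have h := this.tendsto (1:ℝ)
          have h2 : (1 : ℝ) - 2 * 1 + 1 ^ 2 = 0 := by ring
          rw [h2] at h
          exact h.mono_left nhdsWithin_le_nhds
        · apply eventually_nhdsWithin_of_forall
          intro x hx
          have hx1 : x < 1 := hx
          have hp : (0:ℝ) < (1 - x) ^ 2 := pow_pos (by linarith) 2
          simp only [Set.mem_Ioi]
          nlinarith
      have := tendsto_inv_nhdsGT_zero.comp hd
      simpa [one_div, Function.comp_def] using this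
    have := Tendsto.pos_mul_atTop two_pos first_factor_tendsto hsec
    have heq : (fun r : ℝ => (r ^ 2 - 1) / Real.log r * (1 / (1 - 2 * r + r ^ 2))) =
        fun r : ℝ => Tker r 0 := by
      funext r; simp [Tker, Real.cos_zero]
    rw [heq] at this
    exact this
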